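/- Let λ₁ > 0, M > 0, 0 < p ≤ 1 with p·λ₁·M > 1, and let Q < 0 satisfy p·λ₁·e^{M Q} = Q + p·λ₁. Define g(x) = (1 − e^{Q x})/M for 0 ≤ x < M and g(x) = −Q e^{Q x}/(M(Q + p·λ₁)) for x ≥ M, set F_X(t) = 1 − e^{−λ₁ t} and G(x) = ∫₀ˣ g(u)du. Then for every x with 0 ≤ x < M, G(x) = (1 − p)∫₀ˣ F_X(x − u) g(u) du + p·[ ∫_M^{M+x} F_X(x − u + M) g(u) du + ∫₀ˣ F_X(x − u) g(u) du ]. -/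

import Mathlib

open Real MeasureTheory

private lemma hde (c u : ℝ) : HasDerivAt (fun v => Real.exp (c * v)) (c * Real.exp (c * u)) u := by
  simpa [mul_comm] using ((hasDerivAt_id u).const_mul c).exp

/-- The stationary density of the buffer energy under the incremental on-off policy:
`g(x) = (1 - exp(Q x))/M` for `x < M` and `g(x) = -Q exp(Q x)/(M (Q + p λ₁))` for `x ≥ M`. -/
noncomputable def onOffDensity (lam M p Q : ℝ) (x : ℝ) : ℝ :=
  if x < M then (1 - Real.exp (Q * x)) / M
  else (-Q * Real.exp (Q * x)) / (M * (Q + p * lam))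

set_option maxHeartbeats 1000000 in
/-- Verification of Theorem 4 (case `0 ≤ x < M`): the candidate stationary density `g`
satisfies the steady-state integral equation for the CDF `G(x) = ∫₀ˣ g`. -/
theorem stmt3 (lam M p Q : ℝ) (hlam : 0 < lam) (hM : 0 < M)
    (hp0 : 0 < p) (hp1 : p ≤ 1) (hphi : 1 < p * lam * M)
    (hQneg : Q < 0) (hQeq : p * lam * Real.exp (M * Q) = Q + p * lam) :
    ∀ x : ℝ, 0 ≤ x → x < M →
      (∫ u in (0:ℝ)..x, onOffDensity lam M p Q u) =
        (1 - p) * (∫ u in (0:ℝ)..x,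
            (1 - Real.exp (-lam * (x - u))) * onOffDensity lam M p Q u)
        + p * ((∫ u in M..(M + x),
              (1 - Real.exp (-lam * (x - u + M))) * onOffDensity lam M p Q u)
            + ∫ u in (0:ℝ)..x,
              (1 - Real.exp (-lam * (x - u))) * onOffDensity lam M p Q u) := by
  intro x hx0 hxM
  have hM' : M ≠ 0 := ne_of_gt hM
  have hQ' : Q ≠ 0 := ne_of_lt hQneg
  have hlam' : lam ≠ 0 := ne_of_gt hlam
  have hden : 0 < Q + p * lam := by
    rw [← hQeq]; positivity
  have hden' : Q + p * lam ≠ 0 := ne_of_gt hden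
  have hlQ : 0 < lam + Q := by nlinarith
  have hlQ' : lam + Q ≠ 0 := ne_of_gt hlQ
  have hp' : p ≠ 0 := ne_of_gt hp0
  -- resolve the piecewise density on each interval
  have h1 : (∫ u in (0:ℝ)..x, onOffDensity lam M p Q u)
      = ∫ u in (0:ℝ)..x, (1 - Real.exp (Q * u)) / M := by
    apply intervalIntegral.integral_congr
    intro u hu
    rw [Set.uIcc_of_le hx0] at hu
    have : u < M := lt_of_le_of_lt hu.2 hxM
    simp [onOffDensity, this]
  have h2 : (∫ u in (0:ℝ)..x, (1 - Real.exp (-lam * (x - u))) * onOffDensity lam M p Q u)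
      = ∫ u in (0:ℝ)..x, (1 - Real.exp (-lam * (x - u))) * ((1 - Real.exp (Q * u)) / M) := by
    apply intervalIntegral.integral_congr
    intro u hu
    rw [Set.uIcc_of_le hx0] at hu
    have : u < M := lt_of_le_of_lt hu.2 hxM
    simp [onOffDensity, this]
  have h3 : (∫ u in M..(M + x), (1 - Real.exp (-lam * (x - u + M))) * onOffDensity lam M p Q u)
      = ∫ u in M..(M + x),
          (1 - Real.exp (-lam * (x - u + M))) * ((-Q * Real.exp (Q * u)) / (M * (Q + p * lam))) := by
    apply intervalIntegral.integral_congr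
    intro u hu
    rw [Set.uIcc_of_le (by linarith)] at hu
    have : ¬ u < M := not_lt.mpr hu.1
    simp [onOffDensity, this]
  -- closed forms via antiderivatives
  have I1comp : (∫ u in (0:ℝ)..x, (1 - Real.exp (Q * u)) / M)
      = (x - Real.exp (Q * x) / Q) / M - ((0:ℝ) - Real.exp (Q * 0) / Q) / M := by
    apply intervalIntegral.integral_eq_sub_of_hasDerivAt
    · intro u hu
      have h := ((hasDerivAt_id u).sub ((hde Q u).div_const Q)).div_const M
      refine h.congr_deriv ?_
      field_simp
    · apply Continuous.intervalIntegrable; fun_prop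
  have I2comp : (∫ u in (0:ℝ)..x, (1 - Real.exp (-lam * (x - u))) * ((1 - Real.exp (Q * u)) / M))
      = (x - Real.exp (Q * x) / Q - Real.exp (-lam * x) * Real.exp (lam * x) / lam
          + Real.exp (-lam * x) * Real.exp ((lam + Q) * x) / (lam + Q)) / M
        - ((0:ℝ) - Real.exp (Q * 0) / Q - Real.exp (-lam * x) * Real.exp (lam * 0) / lam
          + Real.exp (-lam * x) * Real.exp ((lam + Q) * 0) / (lam + Q)) / M := by
    apply intervalIntegral.integral_eq_sub_of_hasDerivAt
      (f := fun u => (u - Real.exp (Q * u) / Q - Real.exp (-lam * x) * Real.exp (lam * u) / lam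
          + Real.exp (-lam * x) * Real.exp ((lam + Q) * u) / (lam + Q)) / M)
    · intro u hu
      have h := ((((hasDerivAt_id u).sub ((hde Q u).div_const Q)).sub
          (((hde lam u).const_mul (Real.exp (-lam * x))).div_const lam)).add
          (((hde (lam + Q) u).const_mul (Real.exp (-lam * x))).div_const (lam + Q))).div_const M
      refine h.congr_deriv ?_
      rw [show -lam * (x - u) = -lam * x + lam * u by ring,
        show (lam + Q) * u = lam * u + Q * u by ring, Real.exp_add, Real.exp_add]
      field_simp
      ring
    · apply Continuous.intervalIntegrable; fun_prop
  have I3comp : (∫ u in M..(M + x),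
        (1 - Real.exp (-lam * (x - u + M))) * ((-Q * Real.exp (Q * u)) / (M * (Q + p * lam))))
      = (-Q / (M * (Q + p * lam))) * (Real.exp (Q * (M + x)) / Q
            - Real.exp (-lam * (x + M)) * Real.exp ((lam + Q) * (M + x)) / (lam + Q))
        - (-Q / (M * (Q + p * lam))) * (Real.exp (Q * M) / Q
            - Real.exp (-lam * (x + M)) * Real.exp ((lam + Q) * M) / (lam + Q)) := by
    apply intervalIntegral.integral_eq_sub_of_hasDerivAt
      (f := fun u => (-Q / (M * (Q + p * lam))) * (Real.exp (Q * u) / Q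
          - Real.exp (-lam * (x + M)) * Real.exp ((lam + Q) * u) / (lam + Q)))
    · intro u hu
      have h := (((hde Q u).div_const Q).sub
          (((hde (lam + Q) u).const_mul (Real.exp (-lam * (x + M)))).div_const (lam + Q))).const_mul
          (-Q / (M * (Q + p * lam)))
      refine h.congr_deriv ?_
      rw [show -lam * (x - u + M) = -lam * (x + M) + lam * u by ring, Real.exp_add,
        show (lam + Q) * u = lam * u + Q * u by ring, Real.exp_add]
      field_simp
    · apply Continuous.intervalIntegrable; fun_prop
  rw [h1, h2, h3, I1comp, I2comp, I3comp]
  have hc : Real.exp (M * Q) = (Q + p * lam) / (p * lam) := by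
    rw [← hQeq]; field_simp
  have E1 : Real.exp (-lam * x) * Real.exp (lam * x) = 1 := by
    rw [← Real.exp_add]; norm_num
  have E2 : Real.exp (-lam * x) * Real.exp ((lam + Q) * x) = Real.exp (Q * x) := by
    rw [← Real.exp_add]; congr 1; ring
  have E3 : Real.exp (Q * (M + x)) = Real.exp (M * Q) * Real.exp (Q * x) := by
    rw [← Real.exp_add]; congr 1; ring
  have E4 : Real.exp (-lam * (x + M)) * Real.exp ((lam + Q) * (M + x))
      = Real.exp (M * Q) * Real.exp (Q * x) := by
    rw [← Real.exp_add, ← Real.exp_add]; congr 1; ring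
  have E5 : Real.exp (-lam * (x + M)) * Real.exp ((lam + Q) * M)
      = Real.exp (M * Q) * Real.exp (-lam * x) := by
    rw [← Real.exp_add, ← Real.exp_add]; congr 1; ring
  have hc' : Real.exp (Q * M) = (Q + p * lam) / (p * lam) := by
    rw [show Q * M = M * Q by ring, hc]
  simp only [E1, E2, E3, E4, E5, hc, hc', mul_zero, Real.exp_zero, mul_one]
  field_simp
  ring
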